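/- Let $W$ be a discrete random variable taking $N$ values whose probability mass function satisfies $p(w) \ge \delta$ for every $w$, where $0 < \delta \le 1/N$. Then $H(W) \ge \delta (N-1) \log_2(1/\delta)$. -/

import Mathlib

open Real

lemma chord_bound {δ x : ℝ} (hδ0 : 0 < δ) (hδ1 : δ < 1) (hx1 : δ ≤ x) (hx2 : x ≤ 1) :
    (1 - x) * (δ * Real.log (1 / δ)) ≤ Real.negMulLog x := by
  have h1δ : 0 < 1 - δ := by linarith
  have ha : 0 ≤ (1 - x) / (1 - δ) := by
    apply div_nonneg <;> linarith
  have hb : 0 ≤ (x - δ) / (1 - δ) := by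
    apply div_nonneg <;> linarith
  have hab : (1 - x) / (1 - δ) + (x - δ) / (1 - δ) = 1 := by
    field_simp
    ring
  have hc := Real.concaveOn_negMulLog.2 (Set.mem_Ici.2 hδ0.le)
    (Set.mem_Ici.2 (by norm_num : (0:ℝ) ≤ 1)) ha hb hab
  have hx : (1 - x) / (1 - δ) * δ + (x - δ) / (1 - δ) * (1:ℝ) = x := by
    rw [div_mul_eq_mul_div, div_mul_eq_mul_div, ← add_div, div_eq_iff h1δ.ne']
    ring
  simp only [smul_eq_mul, Real.negMulLog_one, mul_zero, add_zero] at hc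
  rw [hx] at hc
  have hδlog : Real.negMulLog δ = δ * Real.log (1 / δ) := by
    simp [Real.negMulLog, Real.log_div, hδ0.ne']
    try ring
  rw [hδlog] at hc
  calc (1 - x) * (δ * Real.log (1 / δ))
      ≤ (1 - x) / (1 - δ) * (δ * Real.log (1 / δ)) := by
        apply mul_le_mul_of_nonneg_right
        · rw [le_div_iff₀ h1δ]; nlinarith
        · have : 0 ≤ Real.log (1 / δ) := Real.log_nonneg (by
            rw [le_div_iff₀ hδ0]; linarith)
          positivity
    _ ≤ Real.negMulLog x := hc

theorem entropy_lower_bound (N : ℕ) (p : Fin N → ℝ) (δ : ℝ)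
    (hδ0 : 0 < δ) (hδN : δ ≤ 1 / N)
    (hsum : ∑ w, p w = 1) (hlb : ∀ w, δ ≤ p w) :
    -∑ w, p w * Real.logb 2 (p w) ≥ δ * ((N : ℝ) - 1) * Real.logb 2 (1 / δ) := by
  have hN : 1 ≤ N := by
    by_contra h
    push_neg at h
    interval_cases N
    simp at hsum
  rcases eq_or_lt_of_le hN with hN1 | hN2
  · -- N = 1
    subst hN1
    have hp0 : p 0 = 1 := by simpa using hsum
    simp [Fin.sum_univ_one, hp0]
  · have hδ1 : δ < 1 := by
      have : (1:ℝ)/N ≤ 1/2 := by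
        apply div_le_div_of_nonneg_left <;> [norm_num; norm_num; exact_mod_cast hN2]
      linarith
    -- each p w ≤ 1
    have hub : ∀ w, p w ≤ 1 := by
      intro w
      have h2 : ∀ v ∈ Finset.univ \ {w}, 0 ≤ p v := fun v _ => le_trans hδ0.le (hlb v)
      have := Finset.sum_le_sum_of_subset_of_nonneg (Finset.subset_univ {w})
        (fun v _ hv => le_trans hδ0.le (hlb v))
      simpa [hsum] using this
    have key : ∀ w, (1 - p w) * (δ * Real.log (1 / δ)) ≤ Real.negMulLog (p w) :=
      fun w => chord_bound hδ0 hδ1 (hlb w) (hub w)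
    have hsum2 : ∑ w, (1 - p w) * (δ * Real.log (1 / δ))
        = ((N : ℝ) - 1) * (δ * Real.log (1 / δ)) := by
      rw [← Finset.sum_mul, Finset.sum_sub_distrib, hsum]
      simp
    have hmain : ((N : ℝ) - 1) * (δ * Real.log (1 / δ)) ≤ ∑ w, Real.negMulLog (p w) := by
      rw [← hsum2]; exact Finset.sum_le_sum fun w _ => key w
    have hlog2 : (0:ℝ) < Real.log 2 := Real.log_pos (by norm_num)
    have heq : -∑ w, p w * Real.logb 2 (p w) = (∑ w, Real.negMulLog (p w)) / Real.log 2 := by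
      rw [Finset.sum_div, ← Finset.sum_neg_distrib]
      congr 1; ext w
      rw [Real.logb, Real.negMulLog]
      field_simp
    rw [ge_iff_le, heq, Real.logb, le_div_iff₀ hlog2]
    calc δ * ((N:ℝ) - 1) * (Real.log (1/δ) / Real.log 2) * Real.log 2
        = ((N : ℝ) - 1) * (δ * Real.log (1 / δ)) := by
          field_simp
      _ ≤ _ := hmain
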